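/- arXiv:1208.5203 — 2 statements merged into one kernel-verified Lean document; each statement's English description precedes it below -/
import Mathlib

section
/- Let M, N_obs, N_inc be positive natural numbers, let z_1,…,z_M ∈ ℝ², let k₋ > 0, let Φ^obs_1,…,Φ^obs_{N_obs} ∈ ℂ and Φ^inc_1,…,Φ^inc_{N_inc} ∈ ℂ, let p_1,…,p_{N_obs} ∈ ℂ² and q_1,…,q_{N_inc} ∈ ℂ², and let a_1,…,a_M, b_1,…,b_M ∈ ℂ. Define the N_obs × N_inc complex matrix 𝕂 entrywise by K_{jl} = Φ^obs_j Φ^inc_l · Σ_{m=1}^{M} ( a_m + b_m (p_j ⋅ q_l) ) · exp( −i k₋ (p_j − q_l) ⋅ z_m ), where ⋅ denotes the bilinear dot product u ⋅ v = u₁v₁ + u₂v₂ extended to complex arguments. Then 𝕂 factorizes as 𝕂 = 𝔻 𝔼 ℍ^T, where: 𝔻 is the N_obs × 3M matrix whose m-th column (1 ≤ m ≤ M) has j-th entry Φ^obs_j exp(−i k₋ p_j ⋅ z_m) and whose (M + 2(m−1) + s)-th column (s = 1, 2) has j-th entry (p_j)_s Φ^obs_j exp(−i k₋ p_j ⋅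 z_m); ℍ is the N_inc × 3M matrix whose m-th column has l-th entry Φ^inc_l exp(i k₋ q_l ⋅ z_m) and whose (M + 2(m−1) + s)-th column has l-th entry (q_l)_s Φ^inc_l exp(i k₋ q_l ⋅ z_m); and 𝔼 is the 3M × 3M diagonal matrix whose first M diagonal entries are a_1,…,a_M and whose remaining diagonal entries are b_1, b_1, b_2, b_2, …, b_M, b_M. -/
open Complex Matrix

/-- Bilinear (non-Hermitian) dot product on `ℂ²`. -/
def cdot (u v : ℂ × ℂ) : ℂ := u.1 * v.1 + u.2 * v.2

/-- Coercion of a real planar point to `ℂ²`. -/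
def toC2 (z : ℝ × ℝ) : ℂ × ℂ := ((z.1 : ℂ), (z.2 : ℂ))

/-- The `s`-th component (s = 1, 2) of a vector in `ℂ²`. -/
def comp (u : ℂ × ℂ) : Fin 2 → ℂ := ![u.1, u.2]

/-- **Factorization of the Multi-Static Response matrix.**
The MSR matrix `K` with entries
`K j l = Φobs j * Φinc l * ∑ m, (a m + b m * (p j ⋅ q l)) * exp (-i k₋ (p j - q l) ⋅ z m)`
factorizes as `K = D * E * Hᵀ`, where the `3M` columns of `D` and `H` are indexed by
`Fin M ⊕ Fin M × Fin 2` (the first `M` columns being the "permittivity" columns and the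
column `(m, s)` being the `(M + 2(m-1) + s)`-th, "permeability", column), and `E` is the
diagonal matrix whose first `M` diagonal entries are `a m` and whose remaining diagonal
entries are `b 1, b 1, b 2, b 2, …, b M, b M`. -/
theorem msr_factorization
    (M Nobs Ninc : ℕ) (hM : 0 < M) (hNobs : 0 < Nobs) (hNinc : 0 < Ninc)
    (z : Fin M → ℝ × ℝ) (km : ℝ) (hkm : 0 < km)
    (Φobs : Fin Nobs → ℂ) (Φinc : Fin Ninc → ℂ)
    (p : Fin Nobs → ℂ × ℂ) (q : Fin Ninc → ℂ × ℂ)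
    (a b : Fin M → ℂ)
    (K : Matrix (Fin Nobs) (Fin Ninc) ℂ)
    (hK : K = Matrix.of fun j l =>
      Φobs j * Φinc l *
        ∑ m : Fin M, (a m + b m * cdot (p j) (q l)) *
          Complex.exp (-Complex.I * km * cdot (p j - q l) (toC2 (z m))))
    (D : Matrix (Fin Nobs) (Fin M ⊕ Fin M × Fin 2) ℂ)
    (hD : D = Matrix.of fun j idx =>
      Sum.elim
        (fun m => Φobs j * Complex.exp (-Complex.I * km * cdot (p j) (toC2 (z m))))
        (fun ms => comp (p j) ms.2 * Φobs j *
          Complex.exp (-Complex.I * km * cdot (p j) (toC2 (z ms.1)))) idx)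
    (H : Matrix (Fin Ninc) (Fin M ⊕ Fin M × Fin 2) ℂ)
    (hH : H = Matrix.of fun l idx =>
      Sum.elim
        (fun m => Φinc l * Complex.exp (Complex.I * km * cdot (q l) (toC2 (z m))))
        (fun ms => comp (q l) ms.2 * Φinc l *
          Complex.exp (Complex.I * km * cdot (q l) (toC2 (z ms.1)))) idx)
    (E : Matrix (Fin M ⊕ Fin M × Fin 2) (Fin M ⊕ Fin M × Fin 2) ℂ)
    (hE : E = Matrix.diagonal (Sum.elim a (fun ms => b ms.1))) :
    K = D * E * Hᵀ := by
  subst hK hD hH hE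
  ext j l
  have key : ∀ m : Fin M,
      Complex.exp (-Complex.I * km * cdot (p j) (toC2 (z m))) *
        Complex.exp (Complex.I * km * cdot (q l) (toC2 (z m))) =
      Complex.exp (-Complex.I * km * cdot (p j - q l) (toC2 (z m))) := by
    intro m
    rw [← Complex.exp_add]
    congr 1
    simp only [cdot, Prod.fst_sub, Prod.snd_sub]
    ring
  rw [Matrix.mul_apply]
  simp only [Matrix.mul_diagonal, Matrix.transpose_apply, Matrix.of_apply,
    Fintype.sum_sum_type, Fintype.sum_prod_type, Sum.elim_inl, Sum.elim_inr,
    Finset.mul_sum]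
  rw [← Finset.sum_add_distrib]
  refine Finset.sum_congr rfl fun m _ => ?_
  rw [← key m]
  simp only [_root_.comp, cdot, Fin.sum_univ_two, Matrix.cons_val_zero, Matrix.cons_val_one,
    Matrix.head_cons]
  ring
end

section
/- With the matrices of the MSR factorization: if 𝕂 = 𝔻 𝔼 ℍ^T where 𝔻 is an N_obs × 3M complex matrix, 𝔼 is a 3M × 3M complex matrix, and ℍ is an N_inc × 3M complex matrix, then the rank of 𝕂 is at most 3M. In particular, the N_obs × N_inc MSR matrix with entries K_{jl} = Φ^obs_j Φ^inc_l Σ_{m=1}^{M} ( a_m + b_m (p_j ⋅ q_l) ) exp( −i k₋ (p_j − q_l) ⋅ z_m ) has rank at most 3M, so it has at most 3M nonzero singular values. -/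
open Complex Matrix

/-- **Rank bound for the MSR matrix.**  If `K = D * E * Hᵀ` with `D : Nobs × 3M`,
`E : 3M × 3M` and `H : Ninc × 3M`, then `rank K ≤ 3M`; in particular the MSR matrix with
entries `K j l = Φobs j * Φinc l * ∑ m, (a m + b m * (p j ⋅ q l)) * exp (-i k₋ (p j - q l) ⋅ z m)`
has rank at most `3M` (hence at most `3M` nonzero singular values). -/
theorem msr_rank_le
    (M Nobs Ninc : ℕ) (hM : 0 < M) (hNobs : 0 < Nobs) (hNinc : 0 < Ninc)
    (z : Fin M → ℝ × ℝ) (km : ℝ) (hkm : 0 < km)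
    (Φobs : Fin Nobs → ℂ) (Φinc : Fin Ninc → ℂ)
    (p : Fin Nobs → ℂ × ℂ) (q : Fin Ninc → ℂ × ℂ)
    (a b : Fin M → ℂ) :
    (∀ (K : Matrix (Fin Nobs) (Fin Ninc) ℂ)
        (D : Matrix (Fin Nobs) (Fin (3 * M)) ℂ)
        (E : Matrix (Fin (3 * M)) (Fin (3 * M)) ℂ)
        (H : Matrix (Fin Ninc) (Fin (3 * M)) ℂ),
        K = D * E * Hᵀ → K.rank ≤ 3 * M) ∧
    (Matrix.of fun j l =>
        Φobs j * Φinc l *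
          ∑ m : Fin M, (a m + b m * cdot (p j) (q l)) *
            Complex.exp (-Complex.I * km * cdot (p j - q l) (toC2 (z m)))
      : Matrix (Fin Nobs) (Fin Ninc) ℂ).rank ≤ 3 * M := by
  classical
  have rank_bound : ∀ (A : Matrix (Fin Nobs) (Fin (3 * M)) ℂ)
      (B : Matrix (Fin Ninc) (Fin (3 * M)) ℂ), (A * Bᵀ).rank ≤ 3 * M := by
    intro A B
    calc (A * Bᵀ).rank ≤ A.rank := Matrix.rank_mul_le_left A Bᵀ
      _ ≤ Fintype.card (Fin (3 * M)) := A.rank_le_card_width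
      _ = 3 * M := Fintype.card_fin _
  constructor
  · intro K D E H hK
    subst hK
    calc (D * E * Hᵀ).rank ≤ (D * E).rank := Matrix.rank_mul_le_left _ _
      _ ≤ Fintype.card (Fin (3 * M)) := (D * E).rank_le_card_width
      _ = 3 * M := Fintype.card_fin _
  · set f : Fin Nobs → Fin 3 × Fin M → ℂ := fun j x =>
      Φobs j * Complex.exp (-Complex.I * km * cdot (p j) (toC2 (z x.2))) *
        ![a x.2, b x.2 * (p j).1, b x.2 * (p j).2] x.1 with hf
    set g : Fin Ninc → Fin 3 × Fin M → ℂ := fun l x =>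
      Φinc l * Complex.exp (Complex.I * km * cdot (q l) (toC2 (z x.2))) *
        ![1, (q l).1, (q l).2] x.1 with hg
    have key : (Matrix.of fun j l =>
        Φobs j * Φinc l *
          ∑ m : Fin M, (a m + b m * cdot (p j) (q l)) *
            Complex.exp (-Complex.I * km * cdot (p j - q l) (toC2 (z m)))
      : Matrix (Fin Nobs) (Fin Ninc) ℂ) =
        (Matrix.of fun j k => f j (finProdFinEquiv.symm k)) *
        (Matrix.of fun l k => g l (finProdFinEquiv.symm k))ᵀ := by
      ext j l
      simp only [Matrix.mul_apply, Matrix.transpose_apply, Matrix.of_apply]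
      rw [← Equiv.sum_comp finProdFinEquiv
        (fun k => f j (finProdFinEquiv.symm k) * g l (finProdFinEquiv.symm k))]
      simp only [Equiv.symm_apply_apply]
      rw [Fintype.sum_prod_type, Fin.sum_univ_three]
      rw [Finset.mul_sum, ← Finset.sum_add_distrib, ← Finset.sum_add_distrib]
      refine Finset.sum_congr rfl fun m _ => ?_
      have hexp : Complex.exp (-Complex.I * km * cdot (p j) (toC2 (z m))) *
          Complex.exp (Complex.I * km * cdot (q l) (toC2 (z m))) =
          Complex.exp (-Complex.I * km * cdot (p j - q l) (toC2 (z m))) := by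
        rw [← Complex.exp_add]
        congr 1
        simp only [cdot, Prod.fst_sub, Prod.snd_sub]
        ring
      simp only [hf, hg, Matrix.cons_val_zero, Matrix.cons_val_one, Matrix.head_cons,
        Matrix.cons_val_two, Matrix.tail_cons]
      rw [← hexp]
      simp only [cdot]
      ring
    rw [key]
    exact rank_bound _ _
end
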